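/- For every word ω : List B, ω is a palindromic reduced word (ω ≠ [], ω is reduced, and ω.reverse = ω) if and only if there exists σ : List B with σ ≠ [], σ ++ σ.dropLast.reverse reduced (i.e., σ ∈ Pref_T), and ω = σ ++ σ.dropLast.reverse. -/
import Mathlib

/-- `ω` is a palindromic reduced word iff `ω = σ ++ σ.dropLast.reverse`
for some word `σ` in the language of reduced words for reflection-prefixes. -/
theorem stmt_9 {B : Type*} {W : Type*} [Group W] {M : CoxeterMatrix B}
    (cs : CoxeterSystem M W) (ω : List B) :
    (ω ≠ [] ∧ cs.IsReduced ω ∧ ω.reverse = ω) ↔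
      ∃ σ : List B, σ ≠ [] ∧ cs.IsReduced (σ ++ σ.dropLast.reverse) ∧
        ω = σ ++ σ.dropLast.reverse := by
  constructor
  · rintro ⟨hne, hred, hpal⟩
    set n := ω.length with hn
    -- n is odd
    have hodd : ¬ 2 ∣ n := by
      intro ⟨k, hk⟩
      have hkn : k ≤ n := by omega
      have hdrop : ω.drop k = (ω.take k).reverse := by
        rw [List.reverse_take, hpal]
        congr 1
        omega
      have h1 : cs.wordProd ω = 1 := by
        conv_lhs => rw [← List.take_append_drop k ω]
        rw [hdrop, cs.wordProd_append, cs.wordProd_reverse, mul_inv_cancel]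
      have := hred
      rw [CoxeterSystem.IsReduced, h1, cs.length_one] at this
      exact hne (List.length_eq_zero_iff.mp this.symm)
    obtain ⟨k, hk⟩ : ∃ k, n = 2 * k + 1 := by
      rcases Nat.even_or_odd n with he | ⟨k, hk⟩
      · exact absurd he.two_dvd hodd
      · exact ⟨k, hk⟩
    refine ⟨ω.take (k + 1), ?_, ?_, ?_⟩
    · rw [← List.length_pos_iff, List.length_take]
      omega
    all_goals {
      have hlen : (ω.take (k + 1)).length = k + 1 := by
        rw [List.length_take]; omega
      have hdl : (ω.take (k + 1)).dropLast = ω.take k := by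
        rw [List.dropLast_eq_take, hlen, Nat.add_sub_cancel, List.take_take]
        congr 1; omega
      have hdrop : ω.drop (k + 1) = (ω.take k).reverse := by
        rw [List.reverse_take, hpal]
        congr 1
        omega
      have hω : ω = ω.take (k + 1) ++ (ω.take (k + 1)).dropLast.reverse := by
        rw [hdl, ← hdrop, List.take_append_drop]
      first
        | exact hω ▸ hred
        | exact hω
    }
  · rintro ⟨σ, hne, hred, rfl⟩
    refine ⟨by simp [hne], hred, ?_⟩
    obtain ⟨a, x, rfl⟩ : ∃ a x, σ = a ++ [x] :=
      ⟨σ.dropLast, σ.getLast hne, (σ.dropLast_append_getLast hne).symm⟩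
    simp
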